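/- Let K be a compact Hausdorff group with Haar probability measure h, and let X ⊆ K be Borel with h(∂X) = 0. For every ε > 0 there exist finitely many points k₁,…,kₙ ∈ K such that if D ⊆ K is any dense subset, one can choose d₁,…,dₙ ∈ D with |h(gX) − (1/n)|{i : dᵢ ∈ gX}|| ≤ 3ε for every g ∈ K, provided the family {gX : g ∈ K} has finite VC-dimension and K is second countable. -/

import Mathlib

open MeasureTheory Set Pointwise Topology
open scoped Classical

noncomputable def Av {Ω : Type*} {n : ℕ} (x : Fin n → Ω) (S : Set Ω) : ℝ :=
  (Finset.univ.filter (fun i => x i ∈ S)).card / n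

def Shatters {G : Type*} (𝓕 : Set (Set G)) (A : Finset G) : Prop :=
  ∀ B ⊆ A, ∃ S ∈ 𝓕, S ∩ (A : Set G) = (B : Set G)

def FiniteVC {G : Type*} (𝓕 : Set (Set G)) : Prop :=
  ∃ n : ℕ, ∀ A : Finset G, A.card = n → ¬ Shatters 𝓕 A

set_option maxHeartbeats 2000000 in
/-- In a second countable compact Hausdorff group with Haar probability
measure `h`, if `X` is Borel with null frontier and its translates have finite
VC-dimension, then for every `ε > 0` there are finitely many points `k₁,…,kₙ` such that
for any dense subset `D` one can choose points `d₁,…,dₙ ∈ D` approximating the measure of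
every translate `gX` up to `3ε`. -/
theorem dense_approximation_of_translates
    {K : Type*} [Group K] [TopologicalSpace K] [IsTopologicalGroup K] [T2Space K]
    [CompactSpace K] [SecondCountableTopology K]
    [MeasurableSpace K] [BorelSpace K]
    (h : Measure K) [h.IsHaarMeasure] [IsProbabilityMeasure h]
    (X : Set K) (hX : MeasurableSet X) (hnull : h (frontier X) = 0)
    (hVC : FiniteVC {S : Set K | ∃ g : K, S = g • X})
    (ε : ℝ) (hε : 0 < ε) :
    ∃ (n : ℕ) (_ : 0 < n) (k : Fin n → K),
      ∀ D : Set K, Dense D →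
        ∃ d : Fin n → K, (∀ i, d i ∈ D) ∧
          ∀ g : K, |(h (g • X)).toReal - Av d (g • X)| ≤ 3 * ε := by
  letI : MetricSpace K := TopologicalSpace.metrizableSpaceMetric K
  set η : ℝ := ε / 2 with hη_def
  have hη : 0 < η := by positivity
  -- measure of interior and closure equal measure of X
  have hsubci : closure X ⊆ interior X ∪ frontier X := by
    intro x hx
    by_cases h2 : x ∈ interior X
    · exact Or.inl h2
    · exact Or.inr ⟨hx, h2⟩
  have h1 : h (closure X) ≤ h (interior X) := by
    calc h (closure X) ≤ h (interior X ∪ frontier X) := measure_mono hsubci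
      _ ≤ h (interior X) + h (frontier X) := measure_union_le _ _
      _ = h (interior X) := by rw [hnull, add_zero]
  have hInt : h (interior X) = h X :=
    le_antisymm (measure_mono interior_subset) ((measure_mono subset_closure).trans h1)
  have hClo : h (closure X) = h X :=
    le_antisymm (h1.trans (measure_mono interior_subset)) (measure_mono subset_closure)
  -- outer approximation by an open set
  obtain ⟨U, hXU, hUopen, hUm⟩ :=
    (closure X).exists_isOpen_lt_of_lt (h (closure X) + ENNReal.ofReal η)
      (ENNReal.lt_add_right (measure_ne_top h _) ((ENNReal.ofReal_pos.2 hη).ne'))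
  have hUreal : (h U).toReal ≤ (h X).toReal + η := by
    have := ENNReal.toReal_mono (by finiteness) hUm.le
    rw [ENNReal.toReal_add (measure_ne_top h _) (by finiteness), hClo,
      ENNReal.toReal_ofReal hη.le] at this
    exact this
  -- inner approximation by a closed set
  obtain ⟨C, hCsub, hCclosed, hCreal⟩ :
      ∃ C, C ⊆ interior X ∧ IsClosed C ∧ (h X).toReal - η ≤ (h C).toReal := by
    rcases le_or_gt (h (interior X)) (ENNReal.ofReal η) with hle | hlt
    · refine ⟨∅, empty_subset _, isClosed_empty, ?_⟩
      have := ENNReal.toReal_mono (by simp) hle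
      rw [hInt, ENNReal.toReal_ofReal hη.le] at this
      simp only [measure_empty, ENNReal.toReal_zero]
      linarith
    · have h2 : h (interior X) - ENNReal.ofReal η < h (interior X) :=
        ENNReal.sub_lt_self (measure_ne_top h _) (by rw [hInt] at hlt ⊢; exact (pos_of_gt hlt).ne'
          ) ((ENNReal.ofReal_pos.2 hη).ne')
      obtain ⟨F, hFU, hFc, hF⟩ := isOpen_interior.exists_lt_isClosed (μ := h) h2
      refine ⟨F, hFU, hFc, ?_⟩
      have h3 : h (interior X) < h F + ENNReal.ofReal η :=
        ENNReal.lt_add_of_sub_lt_right (Or.inl (measure_ne_top h _)) hF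
      have := ENNReal.toReal_mono (by finiteness) h3.le
      rw [ENNReal.toReal_add (measure_ne_top h _) (by finiteness), hInt,
        ENNReal.toReal_ofReal hη.le] at this
      linarith
  -- Urysohn functions
  obtain ⟨φ, hφ0, hφ1, hφ01⟩ :=
    exists_continuous_zero_one_of_isClosed (isOpen_interior (s := X)).isClosed_compl hCclosed
      (disjoint_left.2 fun x hx hxC => hx (hCsub hxC))
  obtain ⟨ψ, hψ0, hψ1, hψ01⟩ :=
    exists_continuous_zero_one_of_isClosed hUopen.isClosed_compl isClosed_closure
      (disjoint_left.2 fun x hx hxc => hx (hXU hxc))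
  -- integral bounds
  have hφint : Integrable (fun x => φ x) h :=
    φ.continuous.integrable_of_hasCompactSupport (HasCompactSupport.of_compactSpace _)
  have hψint : Integrable (fun x => ψ x) h :=
    ψ.continuous.integrable_of_hasCompactSupport (HasCompactSupport.of_compactSpace _)
  have hintφ : (h X).toReal - η ≤ ∫ x, φ x ∂h := by
    have hmono : ∀ x, C.indicator (fun _ => (1:ℝ)) x ≤ φ x := by
      intro x
      by_cases hx : x ∈ C
      · rw [indicator_of_mem hx]; exact le_of_eq (hφ1 hx).symm
      · rw [indicator_of_notMem hx]; exact (hφ01 x).1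
    have : ∫ x, C.indicator (fun _ => (1:ℝ)) x ∂h ≤ ∫ x, φ x ∂h :=
      integral_mono ((integrable_const (1:ℝ)).indicator hCclosed.measurableSet) hφint hmono
    rw [integral_indicator_const (1:ℝ) hCclosed.measurableSet] at this
    simp only [smul_eq_mul, one_mul, mul_one, measureReal_def] at this
    linarith
  have hintψ : ∫ x, ψ x ∂h ≤ (h X).toReal + η := by
    have hmono : ∀ x, ψ x ≤ U.indicator (fun _ => (1:ℝ)) x := by
      intro x
      by_cases hx : x ∈ U
      · rw [indicator_of_mem hx]; exact (hψ01 x).2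
      · rw [indicator_of_notMem hx]; exact le_of_eq (hψ0 hx)
    have : ∫ x, ψ x ∂h ≤ ∫ x, U.indicator (fun _ => (1:ℝ)) x ∂h :=
      integral_mono hψint ((integrable_const (1:ℝ)).indicator hUopen.measurableSet) hmono
    rw [integral_indicator_const (1:ℝ) hUopen.measurableSet] at this
    simp only [smul_eq_mul, one_mul, mul_one, measureReal_def] at this
    linarith
  -- uniform continuity moduli
  have hmod : ∀ f : C(K, ℝ), ∃ δ > 0, ∀ g x y : K, dist x y < δ →
      |f (g⁻¹ * x) - f (g⁻¹ * y)| ≤ η := by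
    intro f
    have hc : Continuous fun q : K × K => f (q.1⁻¹ * q.2) := by fun_prop
    have huc := CompactSpace.uniformContinuous_of_continuous hc
    obtain ⟨δ, hδ, hδ'⟩ := Metric.uniformContinuous_iff.1 huc η hη
    refine ⟨δ, hδ, fun g x y hxy => ?_⟩
    have : dist ((g, x) : K × K) (g, y) < δ := by
      rw [Prod.dist_eq, dist_self]
      exact max_lt hδ hxy
    have := hδ' this
    rw [Real.dist_eq] at this
    exact this.le
  obtain ⟨δ₁, hδ₁, hmodφ⟩ := hmod φ
  obtain ⟨δ₂, hδ₂, hmodψ⟩ := hmod ψ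
  set δ : ℝ := min δ₁ δ₂ with hδ_def
  have hδ : 0 < δ := lt_min hδ₁ hδ₂
  -- finite cover by balls of radius δ/2
  obtain ⟨t, ht⟩ := isCompact_univ.elim_finite_subcover
    (fun q : K => Metric.ball q (δ/2)) (fun q => Metric.isOpen_ball)
    (fun x _ => mem_iUnion.2 ⟨x, Metric.mem_ball_self (by positivity)⟩)
  set L : List K := t.toList with hL_def
  set m : ℕ := L.length with hm_def
  set q : ℕ → K := fun j => L.getD j 1 with hq_def
  have hcover : ∀ x : K, ∃ j < m, x ∈ Metric.ball (q j) (δ/2) := by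
    intro x
    obtain ⟨p, hp1, hp2⟩ := mem_iUnion₂.1 (ht (mem_univ x))
    have hpL : p ∈ L := Finset.mem_toList.2 hp1
    obtain ⟨j, hj, hjp⟩ := List.mem_iff_getElem.1 hpL
    exact ⟨j, hj, by rw [hq_def]; simp only [List.getD_eq_getElem _ _ hj, hjp]; exact hp2⟩
  -- disjointified partition
  set A : ℕ → Set K := fun j =>
    Metric.ball (q j) (δ/2) \ ⋃ (l : ℕ) (_ : l < j), Metric.ball (q l) (δ/2) with hA_def
  have hAmeas : ∀ j, MeasurableSet (A j) := by
    intro j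
    exact (Metric.isOpen_ball.measurableSet).diff
      (MeasurableSet.biUnion (to_countable _) fun l _ => Metric.isOpen_ball.measurableSet)
  have hAsub : ∀ j, A j ⊆ Metric.ball (q j) (δ/2) := fun j => diff_subset
  have hAdisj : ∀ j l, j < l → Disjoint (A j) (A l) := by
    intro j l hjl
    refine disjoint_left.2 fun x hxj hxl => ?_
    exact hxl.2 (mem_iUnion₂.2 ⟨j, hjl, hxj.1⟩)
  have hAcov : ∀ x : K, ∃ j < m, x ∈ A j := by
    intro x
    have hex : ∃ j, x ∈ Metric.ball (q j) (δ/2) := by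
      obtain ⟨j, _, hj2⟩ := hcover x
      exact ⟨j, hj2⟩
    set j0 := Nat.find hex with hj0_def
    obtain ⟨j1, hj1m, hj1⟩ := hcover x
    refine ⟨j0, lt_of_le_of_lt (Nat.find_le hj1) hj1m, Nat.find_spec hex, ?_⟩
    intro hxU
    obtain ⟨l, hl⟩ := mem_iUnion.1 hxU
    obtain ⟨hl1, hl2⟩ := mem_iUnion.1 hl
    exact absurd hl2 (Nat.find_min hex hl1)
  -- representative points
  set p : ℕ → K := fun j => if hne : (A j).Nonempty then hne.choose else 1 with hp_def
  have hpmem : ∀ j, (A j).Nonempty → p j ∈ A j := by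
    intro j hne
    rw [hp_def]
    simp only [dif_pos hne]
    exact hne.choose_spec
  -- weights
  set w : ℕ → ℝ := fun j => (h (A j)).toReal with hw_def
  have hw0 : ∀ j, 0 ≤ w j := fun j => ENNReal.toReal_nonneg
  set W : ℕ → ℝ := fun j => ∑ l ∈ Finset.range j, w l with hW_def
  have hWmono : Monotone W := by
    intro j l hjl
    exact Finset.sum_le_sum_of_subset_of_nonneg (Finset.range_subset_range.2 hjl)
      (fun i _ _ => hw0 i)
  have hW0 : W 0 = 0 := by simp [hW_def]
  have hWm : W m = 1 := by
    have hdisj : (Finset.range m : Set ℕ).Pairwise (Function.onFun Disjoint (fun j => A j)) := by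
      intro j _ l _ hjl
      rcases lt_or_gt_of_ne hjl with hc | hc
      · exact hAdisj j l hc
      · exact (hAdisj l j hc).symm
    have hunion : (⋃ j ∈ Finset.range m, A j) = univ := by
      refine eq_univ_of_forall fun x => ?_
      obtain ⟨j, hjm, hj⟩ := hAcov x
      exact mem_biUnion (Finset.mem_range.2 hjm) hj
    have := measure_biUnion_finset (μ := h) hdisj (fun j _ => hAmeas j)
    rw [hunion, measure_univ] at this
    rw [hW_def]
    simp only [hw_def]
    rw [← ENNReal.toReal_sum (fun j _ => measure_ne_top h _), ← this]
    simp
  -- choice of n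
  set n : ℕ := max 1 ⌈(2 * (m:ℝ)) / η⌉₊ with hn_def
  have hn : 0 < n := lt_of_lt_of_le one_pos (le_max_left _ _)
  have hnR : (0:ℝ) < n := by exact_mod_cast hn
  have hnm : 2 * (m:ℝ) / n ≤ η := by
    rw [div_le_iff₀ hnR]
    have h1 : (2 * (m:ℝ)) / η ≤ ⌈(2 * (m:ℝ)) / η⌉₊ := Nat.le_ceil _
    have h2 : (⌈(2 * (m:ℝ)) / η⌉₊ : ℝ) ≤ n :=
      Nat.cast_le.2 (hn_def ▸ le_max_right 1 _)
    calc 2 * (m:ℝ) = ((2 * (m:ℝ)) / η) * η := by field_simp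
      _ ≤ (n:ℝ) * η := by nlinarith [hη]
      _ = η * n := mul_comm _ _
  -- block boundaries
  set a : ℕ → ℕ := fun j => ⌊(n:ℝ) * W j⌋₊ with ha_def
  have hWnn : ∀ j, 0 ≤ W j := fun j => hW0 ▸ hWmono (Nat.zero_le j)
  have hamono : Monotone a := fun j l hjl =>
    Nat.floor_mono (mul_le_mul_of_nonneg_left (hWmono hjl) (by positivity))
  have ha0 : a 0 = 0 := by simp [ha_def, hW0]
  have ham : a m = n := by rw [ha_def]; simp [hWm]
  have hafloor : ∀ j, (n:ℝ) * W j - 1 < (a j : ℝ) ∧ (a j : ℝ) ≤ (n:ℝ) * W j := by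
    intro j
    constructor
    · have := Nat.lt_floor_add_one ((n:ℝ) * W j); rw [ha_def]; push_cast; linarith
    · exact Nat.floor_le (by have := hWnn j; positivity)
  have hcw : ∀ j, |((a (j+1) - a j : ℕ) : ℝ) / n - w j| ≤ 2 / n := by
    intro j
    have hcast : ((a (j+1) - a j : ℕ) : ℝ) = (a (j+1) : ℝ) - (a j : ℝ) := by
      exact_mod_cast Nat.cast_sub (hamono (Nat.le_succ j))
    have hWsucc : W (j+1) = W j + w j := Finset.sum_range_succ w j
    obtain ⟨h1a, h2a⟩ := hafloor j
    obtain ⟨h1b, h2b⟩ := hafloor (j+1)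
    have hkey : |((a (j+1):ℝ) - (a j:ℝ)) - (n:ℝ) * w j| ≤ 2 := by
      have hnw : (n:ℝ) * w j = (n:ℝ) * W (j+1) - (n:ℝ) * W j := by rw [hWsucc]; ring
      rw [hnw, abs_le]
      constructor <;> nlinarith
    rw [hcast]
    have heq : ((a (j+1):ℝ) - (a j:ℝ)) / n - w j
        = (((a (j+1):ℝ) - (a j:ℝ)) - (n:ℝ) * w j) / n := by field_simp
    rw [heq, abs_div, abs_of_pos hnR]
    gcongr
  -- index map
  set J : ℕ → ℕ := fun i => Nat.findGreatest (fun j => a j ≤ i) m with hJ_def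
  have hJspec : ∀ i, i < n → a (J i) ≤ i := by
    intro i _
    exact Nat.findGreatest_spec (P := fun j => a j ≤ i) (Nat.zero_le m) (by show a 0 ≤ i; rw [ha0]; exact Nat.zero_le i)
  have hJle : ∀ i, J i ≤ m := fun i => Nat.findGreatest_le m
  have hJlt : ∀ i, i < n → J i < m := by
    intro i hi
    rcases lt_or_eq_of_le (hJle i) with hc | hc
    · exact hc
    · exfalso
      have := hJspec i hi
      rw [hc, ham] at this
      omega
  have hJgt : ∀ i, i < n → i < a (J i + 1) := by
    intro i hi
    by_contra hcon
    push_neg at hcon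
    have h1 : J i + 1 ≤ m := hJlt i hi
    have h2 : J i + 1 ≤ J i := Nat.le_findGreatest (P := fun j => a j ≤ i) h1 hcon
    omega
  -- fibers of J are the intervals [a j, a (j+1))
  have hfiber : ∀ j, j < m →
      (Finset.range n).filter (fun i => J i = j) = Finset.Ico (a j) (a (j+1)) := by
    intro j hjm
    ext i
    simp only [Finset.mem_filter, Finset.mem_range, Finset.mem_Ico]
    constructor
    · rintro ⟨hin, rfl⟩
      exact ⟨hJspec i hin, hJgt i hin⟩
    · rintro ⟨hai, hai'⟩
      have hin : i < n := lt_of_lt_of_le hai' (ham ▸ hamono (Nat.succ_le_of_lt hjm))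
      refine ⟨hin, ?_⟩
      have hge : j ≤ J i := Nat.le_findGreatest (P := fun l => a l ≤ i) (le_of_lt hjm) hai
      have hle : J i ≤ j := by
        by_contra hcon
        push_neg at hcon
        have hmono : a (j+1) ≤ a (J i) := hamono hcon
        have := hJspec i hin
        omega
      omega
  -- the sandwich by Urysohn functions
  have hsand : ∀ y : K, φ y ≤ X.indicator (fun _ => (1:ℝ)) y ∧
      X.indicator (fun _ => (1:ℝ)) y ≤ ψ y := by
    intro y
    by_cases hy : y ∈ X
    · rw [indicator_of_mem hy]
      refine ⟨(hφ01 y).2, ?_⟩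
      have h1 : ψ y = 1 := by
        have := hψ1 (subset_closure hy)
        simpa using this
      exact h1.ge
    · rw [indicator_of_notMem hy]
      refine ⟨?_, (hψ01 y).1⟩
      have hni : y ∈ (interior X)ᶜ := fun hc => hy (interior_subset hc)
      have h1 : φ y = 0 := by
        have := hφ0 hni
        simpa using this
      exact h1.le
  -- provide n and the points
  refine ⟨n, hn, fun i => p (J i.1), ?_⟩
  intro D hD
  have hpick : ∀ j : ℕ, ∃ y, y ∈ D ∧ dist y (p j) < δ := by
    intro j
    obtain ⟨y, hy1, hy2⟩ := Metric.dense_iff.1 hD (p j) δ hδ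
    exact ⟨y, hy2, Metric.mem_ball.1 hy1⟩
  choose d' hd'D hd'near using hpick
  refine ⟨fun i => d' (J i.1), fun i => hd'D _, ?_⟩
  -- grouped sums
  have hsum : ∀ F : K → ℝ, ∑ i : Fin n, F (d' (J i.1))
      = ∑ j ∈ Finset.range m, ((a (j+1) - a j : ℕ) : ℝ) * F (d' j) := by
    intro F
    rw [Fin.sum_univ_eq_sum_range (fun i => F (d' (J i))) n]
    calc ∑ i ∈ Finset.range n, F (d' (J i))
        = ∑ j ∈ Finset.range m, ∑ i ∈ (Finset.range n).filter (fun i => J i = j),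
            F (d' (J i)) :=
          (Finset.sum_fiberwise_of_maps_to
            (fun i hi => Finset.mem_range.2 (hJlt i (Finset.mem_range.1 hi))) _).symm
      _ = ∑ j ∈ Finset.range m, ((a (j+1) - a j : ℕ) : ℝ) * F (d' j) := by
          refine Finset.sum_congr rfl fun j hj => ?_
          have hjm := Finset.mem_range.1 hj
          have hcongr : ∀ i ∈ (Finset.range n).filter (fun i => J i = j),
              F (d' (J i)) = F (d' j) := by
            intro i hi; rw [(Finset.mem_filter.1 hi).2]
          rw [Finset.sum_congr rfl hcongr, Finset.sum_const, hfiber j hjm, Nat.card_Ico]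
          simp [nsmul_eq_mul]
  -- key estimate for continuous functions with modulus δ
  have key : ∀ f : K → ℝ, Continuous f → (∀ x, f x ∈ Icc (0:ℝ) 1) →
      (∀ g x y : K, dist x y < δ → |f (g⁻¹ * x) - f (g⁻¹ * y)| ≤ η) →
      ∀ g : K, |(∑ i : Fin n, f (g⁻¹ * d' (J i.1))) / n - ∫ x, f x ∂h| ≤ 3 * η := by
    intro f hfcont hf01 hfmod g
    set F : K → ℝ := fun x => f (g⁻¹ * x) with hF_def
    have hFint : ∫ x, F x ∂h = ∫ x, f x ∂h := integral_mul_left_eq_self f g⁻¹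
    have hFbd : ∀ x, 0 ≤ F x ∧ F x ≤ 1 := fun x => ⟨(hf01 _).1, (hf01 _).2⟩
    have hE : (∑ i : Fin n, F (d' (J i.1))) / n
        = ∑ j ∈ Finset.range m, (((a (j+1) - a j : ℕ) : ℝ)/n) * F (d' j) := by
      rw [hsum F, Finset.sum_div]
      exact Finset.sum_congr rfl fun j _ => by ring
    have hstep1 : |∑ j ∈ Finset.range m, (((a (j+1) - a j : ℕ) : ℝ)/n) * F (d' j)
        - ∑ j ∈ Finset.range m, w j * F (d' j)| ≤ η := by
      rw [← Finset.sum_sub_distrib]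
      refine (Finset.abs_sum_le_sum_abs _ _).trans ?_
      have hterm : ∀ j ∈ Finset.range m,
          |(((a (j+1) - a j : ℕ) : ℝ)/n) * F (d' j) - w j * F (d' j)| ≤ 2/n := by
        intro j _
        rw [← sub_mul, abs_mul]
        have habs : |F (d' j)| ≤ 1 := by
          rw [abs_le]; exact ⟨by linarith [(hFbd (d' j)).1], (hFbd (d' j)).2⟩
        calc |((a (j+1) - a j : ℕ) : ℝ)/n - w j| * |F (d' j)| ≤ (2/n) * 1 :=
              mul_le_mul (hcw j) habs (abs_nonneg _) (by positivity)
          _ = 2/n := mul_one _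
      refine (Finset.sum_le_sum hterm).trans ?_
      rw [Finset.sum_const, Finset.card_range, nsmul_eq_mul]
      calc (m:ℝ) * (2/n) = 2 * (m:ℝ) / n := by ring
        _ ≤ η := hnm
    have hstep2 : |∑ j ∈ Finset.range m, w j * F (d' j)
        - ∑ j ∈ Finset.range m, w j * F (p j)| ≤ η := by
      rw [← Finset.sum_sub_distrib]
      refine (Finset.abs_sum_le_sum_abs _ _).trans ?_
      have hterm : ∀ j ∈ Finset.range m,
          |w j * F (d' j) - w j * F (p j)| ≤ w j * η := by
        intro j _
        rw [← mul_sub, abs_mul, abs_of_nonneg (hw0 j)]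
        exact mul_le_mul_of_nonneg_left (hfmod g (d' j) (p j) (hd'near j)) (hw0 j)
      refine (Finset.sum_le_sum hterm).trans ?_
      rw [← Finset.sum_mul]
      have : ∑ j ∈ Finset.range m, w j = 1 := hWm
      rw [this, one_mul]
    have hstep3 : |∑ j ∈ Finset.range m, w j * F (p j) - ∫ x, F x ∂h| ≤ η := by
      set s : K → ℝ := fun x => ∑ j ∈ Finset.range m,
        (A j).indicator (fun _ => F (p j)) x with hs_def
      have hsint : Integrable s h :=
        integrable_finset_sum _ (fun j _ => (integrable_const _).indicator (hAmeas j))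
      have hsintegral : ∫ x, s x ∂h = ∑ j ∈ Finset.range m, w j * F (p j) := by
        rw [hs_def]
        rw [integral_finset_sum _ (fun j _ => (integrable_const _).indicator (hAmeas j))]
        refine Finset.sum_congr rfl fun j _ => ?_
        rw [integral_indicator_const _ (hAmeas j)]
        simp only [smul_eq_mul, hw_def, measureReal_def]
      have hpoint : ∀ x, |s x - F x| ≤ η := by
        intro x
        obtain ⟨j0, hj0m, hj0⟩ := hAcov x
        have hsx : s x = F (p j0) := by
          simp only [hs_def]
          rw [Finset.sum_eq_single j0]
          · rw [indicator_of_mem hj0]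
          · intro j hj hne
            refine indicator_of_notMem (fun hxj => ?_) _
            rcases lt_or_gt_of_ne hne with hc | hc
            · exact (disjoint_left.1 (hAdisj j j0 hc)) hxj hj0
            · exact (disjoint_left.1 (hAdisj j0 j hc)) hj0 hxj
          · intro hj0m'
            exact absurd (Finset.mem_range.2 hj0m) hj0m'
        rw [hsx]
        have hne : (A j0).Nonempty := ⟨x, hj0⟩
        have hpj0 := hpmem j0 hne
        have hd1 : dist x (q j0) < δ/2 := Metric.mem_ball.1 (hAsub j0 hj0)
        have hd2 : dist (p j0) (q j0) < δ/2 := Metric.mem_ball.1 (hAsub j0 hpj0)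
        have hdist : dist (p j0) x < δ := by
          calc dist (p j0) x ≤ dist (p j0) (q j0) + dist x (q j0) :=
                dist_triangle_right _ _ _
            _ < δ := by linarith
        exact hfmod g (p j0) x hdist
      have hFcont : Continuous F := by
        rw [hF_def]; fun_prop
      have hFint' : Integrable F h :=
        hFcont.integrable_of_hasCompactSupport (HasCompactSupport.of_compactSpace _)
      rw [← hsintegral, ← neg_sub, abs_neg, ← integral_sub hFint' hsint]
      have hb := norm_integral_le_of_norm_le_const (μ := h)
        (f := fun x => F x - s x) (C := η)
        (Filter.Eventually.of_forall (fun x => by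
          rw [Real.norm_eq_abs, ← abs_neg, neg_sub]
          exact hpoint x))
      rw [Real.norm_eq_abs] at hb
      calc |∫ x, (F x - s x) ∂h| ≤ η * (h univ).toReal := hb
        _ = η := by simp
    -- combine the three steps
    have hEq := hE
    have htot : |(∑ i : Fin n, F (d' (J i.1))) / n - ∫ x, F x ∂h| ≤ 3 * η := by
      rw [hEq]
      have t1 := abs_le.1 hstep1
      have t2 := abs_le.1 hstep2
      have t3 := abs_le.1 hstep3
      rw [abs_le]
      constructor <;> linarith [t1.1, t1.2, t2.1, t2.2, t3.1, t3.2]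
    rw [hFint] at htot
    exact htot
  -- instantiate for φ and ψ
  have hmodφ' : ∀ g x y : K, dist x y < δ → |φ (g⁻¹ * x) - φ (g⁻¹ * y)| ≤ η :=
    fun g x y hxy => hmodφ g x y (lt_of_lt_of_le hxy (min_le_left _ _))
  have hmodψ' : ∀ g x y : K, dist x y < δ → |ψ (g⁻¹ * x) - ψ (g⁻¹ * y)| ≤ η :=
    fun g x y hxy => hmodψ g x y (lt_of_lt_of_le hxy (min_le_right _ _))
  intro g
  have hφg := key φ φ.continuous hφ01 hmodφ' g
  have hψg := key ψ ψ.continuous hψ01 hmodψ' g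
  -- Av in terms of indicators
  have hAvg : Av (fun i : Fin n => d' (J i.1)) (g • X)
      = (∑ i : Fin n, X.indicator (fun _ => (1:ℝ)) (g⁻¹ * d' (J i.1))) / n := by
    unfold Av
    congr 1
    rw [Finset.card_filter]
    push_cast
    refine Finset.sum_congr rfl fun i _ => ?_
    by_cases hi : d' (J i.1) ∈ g • X
    · have hmem : g⁻¹ * d' (J i.1) ∈ X := by
        have := Set.mem_smul_set_iff_inv_smul_mem.1 hi
        simpa [smul_eq_mul] using this
      simp [hi, hmem]
    · have hmem : g⁻¹ * d' (J i.1) ∉ X := by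
        intro hc
        exact hi (Set.mem_smul_set_iff_inv_smul_mem.2 (by simpa [smul_eq_mul] using hc))
      simp [hi, hmem]
  -- sandwich of sums
  have hlow : (∑ i : Fin n, φ (g⁻¹ * d' (J i.1))) / n
      ≤ Av (fun i : Fin n => d' (J i.1)) (g • X) := by
    rw [hAvg]
    gcongr with i _
    exact (hsand _).1
  have hhigh : Av (fun i : Fin n => d' (J i.1)) (g • X)
      ≤ (∑ i : Fin n, ψ (g⁻¹ * d' (J i.1))) / n := by
    rw [hAvg]
    gcongr with i _
    exact (hsand _).2
  -- measure equality and conclusion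
  have hgm : (h (g • X)).toReal = (h X).toReal := by
    rw [MeasureTheory.measure_smul h g X]
  rw [hgm]
  have b1 := abs_le.1 hφg
  have b2 := abs_le.1 hψg
  have hεη : η = ε / 2 := hη_def
  rw [abs_le]
  constructor
  · have hb : Av (fun i : Fin n => d' (J i.1)) (g • X) ≤ (h X).toReal + 4 * η := by
      linarith [b2.2, hintψ, hhigh]
    linarith
  · have hb : (h X).toReal - 4 * η ≤ Av (fun i : Fin n => d' (J i.1)) (g • X) := by
      linarith [b1.1, hintφ, hlow]
    linarith
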